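/- For every k ≥ 1, the k-fold blocked tensor M_k^{(x)} of the Majorana-shift MPO tensor with ancilla (blocked with the fermionic blocking signs) satisfies r(M_k^{(x)}) = 2·d^k and ℓ(M_k^{(x)}) = d^k, where d = 2x is the physical dimension. -/

import Mathlib

open Matrix Kronecker
open scoped ComplexOrder

namespace FQCA

noncomputable section

/-- The sign `(-1)^x` associated with a parity `x ∈ ℤ₂`. -/
def sgn (x : ZMod 2) : ℂ := (-1 : ℂ) ^ x.val

/-- Entrywise complex conjugation of a matrix. -/
def mconj {m n : Type*} (A : Matrix m n ℂ) : Matrix m n ℂ := A.map (starRingEnd ℂ)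

/-- A diagonal matrix with diagonal entries `±1`. -/
def IsParityMatrix {ν : Type*} (Z : Matrix ν ν ℂ) : Prop :=
  Z.IsDiag ∧ ∀ α, Z α α = 1 ∨ Z α α = -1

/-- An even tensor: `Z * A i = (-1)^{|i|} A i * Z`. -/
def EvenTensor {ι ν : Type*} [Fintype ν] (p : ι → ZMod 2)
    (A : ι → Matrix ν ν ℂ) (Z : Matrix ν ν ℂ) : Prop :=
  ∀ i, Z * A i = sgn (p i) • (A i * Z)

/-- The transfer matrix `E_A = Σ_i A^i ⊗ conj (A^i)`. -/
def transfer {ι ν : Type*} [Fintype ι] (A : ι → Matrix ν ν ℂ) :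
    Matrix (ν × ν) (ν × ν) ℂ :=
  ∑ i, (A i) ⊗ₖ (mconj (A i))

/-- `P` is the orthogonal projector of a nonzero proper graded invariant subspace for `A`. -/
def GradedInvariantProj {ι ν : Type*} [Fintype ν] [DecidableEq ν]
    (A : ι → Matrix ν ν ℂ) (Z P : Matrix ν ν ℂ) : Prop :=
  P * P = P ∧ Pᴴ = P ∧ P ≠ 0 ∧ P ≠ 1 ∧ P * Z = Z * P ∧ ∀ i, A i * P = P * (A i * P)

/-- A graded irreducible tensor: no nonzero proper graded invariant subspace. -/
def GradedIrreducible {ι ν : Type*} [Fintype ν] [DecidableEq ν]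
    (A : ι → Matrix ν ν ℂ) (Z : Matrix ν ν ℂ) : Prop :=
  ¬ ∃ P, GradedInvariantProj A Z P

/-- A graded normal tensor, `mult = 1` (non-degenerate) or `2` (degenerate):
graded irreducible, `1` is an eigenvalue of the transfer matrix of algebraic multiplicity
`mult`, and all other eigenvalues have modulus `< 1`. -/
def GradedNormal {ι ν : Type*} [Fintype ι] [Fintype ν] [DecidableEq ν]
    (A : ι → Matrix ν ν ℂ) (Z : Matrix ν ν ℂ) (mult : ℕ) : Prop :=
  GradedIrreducible A Z ∧
  (Matrix.charpoly (transfer A)).rootMultiplicity 1 = mult ∧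
  ∀ μ ∈ spectrum ℂ (transfer A), μ ≠ 1 → ‖μ‖ < 1

/-- Graded Canonical Form: `A^i = ⊕ₖ μₖ Aₖ^i` with `Z` block diagonal in the same way and
every block a graded normal tensor. -/
def GCF {ι ν : Type*} [Fintype ι] [Fintype ν] [DecidableEq ν]
    (p : ι → ZMod 2) (A : ι → Matrix ν ν ℂ) (Z : Matrix ν ν ℂ) : Prop :=
  ∃ (g : ℕ) (Dk : Fin g → ℕ) (e : ν ≃ ((k : Fin g) × Fin (Dk k)))
    (μ : Fin g → ℂ)
    (Ak : (k : Fin g) → ι → Matrix (Fin (Dk k)) (Fin (Dk k)) ℂ)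
    (Zk : (k : Fin g) → Matrix (Fin (Dk k)) (Fin (Dk k)) ℂ),
    0 < g ∧
    (∀ i, Matrix.reindex e e (A i) = Matrix.blockDiagonal' (fun k => μ k • Ak k i)) ∧
    Matrix.reindex e e Z = Matrix.blockDiagonal' Zk ∧
    ∀ k, IsParityMatrix (Zk k) ∧ EvenTensor p (Ak k) (Zk k) ∧
      (GradedNormal (Ak k) (Zk k) 1 ∨ GradedNormal (Ak k) (Zk k) 2)

/-- The coefficient `tr(A^{n₁} ⋯ A^{n_N})` of the fMPS with antiperiodic boundary
conditions generated by the tensor `A`. -/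
def mpsCoeff {ι ν : Type*} [Fintype ν] [DecidableEq ν] {N : ℕ}
    (A : ι → Matrix ν ν ℂ) (n : Fin N → ι) : ℂ :=
  ((List.ofFn fun j => A (n j)).prod).trace

/-- The fermionic sign `σ(n,m) = Σ_{k<j} (|n_j|+|m_j|)·|m_k|` of an fMPO matrix element. -/
def mpoSign {ι : Type*} (p : ι → ZMod 2) {N : ℕ} (n m : Fin N → ι) : ZMod 2 :=
  ∑ jk ∈ Finset.univ.filter (fun jk : Fin N × Fin N => jk.2 < jk.1),
    (p (n jk.1) + p (m jk.1)) * p (m jk.2)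

/-- The fMPO with antiperiodic boundary conditions generated by the MPO tensor `U`. -/
def fMPO {ι : Type*} (p : ι → ZMod 2) {ν : Type*} [Fintype ν] [DecidableEq ν]
    (U : ι → ι → Matrix ν ν ℂ) (N : ℕ) :
    Matrix (Fin N → ι) (Fin N → ι) ℂ :=
  Matrix.of fun n m =>
    sgn (mpoSign p n m) * ((List.ofFn fun j => U (n j) (m j)).prod).trace

/-- The fMPO with periodic boundary conditions generated by the MPO tensor `U`
(parity operator `Z` inserted in the trace). -/
def fMPO_PBC {ι : Type*} (p : ι → ZMod 2) {ν : Type*} [Fintype ν] [DecidableEq ν]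
    (Z : Matrix ν ν ℂ) (U : ι → ι → Matrix ν ν ℂ) (N : ℕ) :
    Matrix (Fin N → ι) (Fin N → ι) ℂ :=
  Matrix.of fun n m =>
    sgn (mpoSign p n m) * (Z * (List.ofFn fun j => U (n j) (m j)).prod).trace

/-- The fermionic blocking sign `τ(n,m) = Σ_{j<l} |m_j|·(|n_l|+|m_l|)`. -/
def blockSign {ι : Type*} (p : ι → ZMod 2) {q : ℕ} (n m : Fin q → ι) : ZMod 2 :=
  ∑ jl ∈ Finset.univ.filter (fun jl : Fin q × Fin q => jl.1 < jl.2),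
    p (m jl.1) * (p (n jl.2) + p (m jl.2))

/-- The `q`-fold blocked MPO tensor, with the fermionic blocking signs. -/
def blocked {ι : Type*} (p : ι → ZMod 2) {ν : Type*} [Fintype ν] [DecidableEq ν]
    (U : ι → ι → Matrix ν ν ℂ) (q : ℕ) :
    (Fin q → ι) → (Fin q → ι) → Matrix ν ν ℂ :=
  fun n m => sgn (blockSign p n m) • ((List.ofFn fun j => U (n j) (m j)).prod)

/-- The right rank `r(U)`: rank of the matrix with entry
`(-1)^{|n||m|} (U^{n,m})_{α,β}` in row `(n,β)` and column `(m,α)`. -/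
def rightRank {ι ν : Type*} [Fintype ι] [Fintype ν]
    (p : ι → ZMod 2) (U : ι → ι → Matrix ν ν ℂ) : ℕ :=
  (Matrix.of fun (r c : ι × ν) => sgn (p r.1 * p c.1) * U r.1 c.1 c.2 r.2).rank

/-- The left rank `ℓ(U)`: rank of the matrix with entry `(U^{n,m})_{α,β}`
in row `(n,α)` and column `(m,β)`. -/
def leftRank {ι ν : Type*} [Fintype ι] [Fintype ν]
    (U : ι → ι → Matrix ν ν ℂ) : ℕ :=
  (Matrix.of fun (r c : ι × ν) => U r.1 c.1 r.2 c.2).rank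

/-- The Pauli matrix `σˣ`, indexed by `Bool`. -/
def pauliX : Matrix Bool Bool ℂ := Matrix.of fun a b => if a = b then 0 else 1

/-- The Pauli matrix `σᶻ`, indexed by `Bool`. -/
def pauliZ : Matrix Bool Bool ℂ := Matrix.diagonal (fun b => if b then -1 else 1)

/-- The single-site physical parity matrix `P = diag((-1)^{|i|})`. -/
def singleP {ι : Type*} [DecidableEq ι] (p : ι → ZMod 2) : Matrix ι ι ℂ :=
  Matrix.diagonal (fun i => sgn (p i))

/-- The parity of the doubled physical index `(n,m)` of an MPO tensor. -/
def doubledP {ι : Type*} (p : ι → ZMod 2) : ι × ι → ZMod 2 :=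
  fun nm => p nm.1 + p nm.2

/-- An MPO tensor regarded as a tensor in the doubled physical index. -/
def doubledT {ι ν : Type*} (U : ι → ι → Matrix ν ν ℂ) : ι × ι → Matrix ν ν ℂ :=
  fun nm => U nm.1 nm.2

/-- An MPO tensor rescaled by `c`, regarded as a tensor in the doubled physical index. -/
def mpoScaled {ι ν : Type*} (c : ℂ) (U : ι → ι → Matrix ν ν ℂ) : ι × ι → Matrix ν ν ℂ :=
  fun nm => c • U nm.1 nm.2

/-- The parity operator `σᶻ ⊗ I` on the bond space `Bool × Fin b`. -/
def ZBP (b : ℕ) : Matrix (Bool × Fin b) (Bool × Fin b) ℂ :=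
  pauliZ ⊗ₖ (1 : Matrix (Fin b) (Fin b) ℂ)

/-- Structure of a type II MPO tensor: `U^{n,m} = (σˣ)^{|n|+|m|} ⊗ N^{n,m}`. -/
def TypeIIStruct {d b : ℕ} (p : Fin d → ZMod 2)
    (U : Fin d → Fin d → Matrix (Bool × Fin b) (Bool × Fin b) ℂ) : Prop :=
  ∃ Nm : Fin d → Fin d → Matrix (Fin b) (Fin b) ℂ,
    ∀ n m', U n m' = (pauliX ^ (p n + p m').val) ⊗ₖ Nm n m'

/-- The parity matrix of the product grading on `q` sites. -/
def bigP {d : ℕ} (p : Fin d → ZMod 2) (q : ℕ) :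
    Matrix (Fin q → Fin d) (Fin q → Fin d) ℂ :=
  Matrix.diagonal (fun n => sgn (∑ i, p (n i)))

/-- The Jordan-Wigner embedding at site `j` of a local operator `O` homogeneous of
parity `o`: `P^{|O|} ⊗ ⋯ ⊗ P^{|O|} ⊗ O ⊗ I ⊗ ⋯ ⊗ I`. -/
def jordanWigner {d N : ℕ} (p : Fin d → ZMod 2) (o : ZMod 2)
    (O : Matrix (Fin d) (Fin d) ℂ) (j : Fin N) :
    Matrix (Fin N → Fin d) (Fin N → Fin d) ℂ :=
  Matrix.of fun n m =>
    (∏ l ∈ Finset.univ.filter (fun l : Fin N => l < j),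
      ((singleP p) ^ o.val) (n l) (m l)) *
    O (n j) (m j) *
    (∏ l ∈ Finset.univ.filter (fun l : Fin N => j < l),
      (if n l = m l then (1:ℂ) else 0))

/-- Physical parity of the Majorana-shift tensor with ancilla:
`|(n,a)| = n + |a| mod 2`. -/
def pMaj {x : ℕ} (pa : Fin x → ZMod 2) : Fin 2 × Fin x → ZMod 2 :=
  fun na => ((na.1 : ℕ) : ZMod 2) + pa na.2

/-- The Pauli matrix `σˣ` on the two-dimensional bond space `Fin 2`. -/
def sigmaX2 : Matrix (Fin 2) (Fin 2) ℂ := Matrix.of fun a b => if a = b then 0 else 1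

/-- The Majorana-shift MPO tensor with ancilla:
`M^{(n,a),(m,b)} = δ_{a,b} · 2^{-1/2} · iᵐ · (σˣ)^{n+m}`. -/
def MajTensor {x : ℕ} :
    (Fin 2 × Fin x) → (Fin 2 × Fin x) → Matrix (Fin 2) (Fin 2) ℂ :=
  fun na mb =>
    if na.2 = mb.2 then
      (((Real.sqrt 2 : ℂ))⁻¹ * Complex.I ^ ((mb.1 : ℕ))) •
        (sigmaX2 ^ ((na.1 : ℕ) + (mb.1 : ℕ)))
    else 0

/-! ### Auxiliary machinery for Statement 16 -/

section Aux

lemma neg_one_pow_mod_two (n : ℕ) : ((-1 : ℂ)) ^ (n % 2) = (-1) ^ n := by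
  conv_rhs => rw [← Nat.div_add_mod n 2, pow_add, pow_mul]
  simp

lemma sgn_zero' : sgn 0 = 1 := rfl

lemma sgn_add (a b : ZMod 2) : sgn (a + b) = sgn a * sgn b := by
  unfold sgn
  rw [ZMod.val_add, neg_one_pow_mod_two, pow_add]

lemma sgn_ne_zero (a : ZMod 2) : sgn a ≠ 0 := by
  unfold sgn; exact pow_ne_zero _ (by norm_num)

lemma sgn_sum {α : Type*} (s : Finset α) (f : α → ZMod 2) :
    sgn (∑ i ∈ s, f i) = ∏ i ∈ s, sgn (f i) := by
  classical
  induction s using Finset.induction_on with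
  | empty => simp [sgn_zero']
  | insert a s h ih => simp [Finset.sum_insert h, Finset.prod_insert h, sgn_add, ih]

lemma zmod2_sum (f : ZMod 2 → ℂ) : ∑ b : ZMod 2, f b = f 0 + f 1 := by
  have : (Finset.univ : Finset (ZMod 2)) = {0, 1} := by decide
  rw [this, Finset.sum_insert (by decide), Finset.sum_singleton]

lemma zmod2_eq_iff_add_eq_zero (a b : ZMod 2) : a = b ↔ a + b = 0 := by revert a b; decide

lemma zmod2_add_self (a : ZMod 2) : a + a = 0 := by revert a; decide

lemma zmod2_val_cast (u : ZMod 2) : ((u.val : ℕ) : ZMod 2) = u := by revert u; decide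

lemma sum_sgn_mul (t : ZMod 2) : ∑ b : ZMod 2, sgn (t * b) = if t = 0 then 2 else 0 := by
  rw [zmod2_sum]
  rcases (by decide : ∀ u : ZMod 2, u = 0 ∨ u = 1) t with h | h <;> subst h <;> simp [sgn, ZMod.val_one] <;> norm_num

lemma sum_sgn_pair {q : ℕ} (t : Fin q → ZMod 2) :
    ∑ v : Fin q → ZMod 2, sgn (∑ j, t j * v j) = if t = 0 then (2 ^ q : ℂ) else 0 := by
  have h1 : ∀ v : Fin q → ZMod 2, sgn (∑ j, t j * v j) = ∏ j, sgn (t j * v j) := fun v =>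
    sgn_sum _ _
  simp_rw [h1]
  rw [← Fintype.piFinset_univ, ← Finset.prod_univ_sum (fun _ => (Finset.univ : Finset (ZMod 2)))
    (fun j b => sgn (t j * b))]
  have h2 : ∀ j, (∑ b : ZMod 2, sgn (t j * b)) = if t j = 0 then 2 else 0 := fun j =>
    sum_sgn_mul _
  simp_rw [h2]
  by_cases ht : t = 0
  · subst ht; simp
  · rw [if_neg ht]
    obtain ⟨j, hj⟩ : ∃ j, t j ≠ 0 := by
      by_contra h; push_neg at h; exact ht (funext h)
    exact Finset.prod_eq_zero (Finset.mem_univ j) (by simp [hj])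

lemma rank_smul_one {n : Type*} [Fintype n] [DecidableEq n] {c : ℂ} (hc : c ≠ 0) :
    (c • (1 : Matrix n n ℂ)).rank = Fintype.card n := by
  apply Matrix.rank_of_isUnit
  rw [Matrix.isUnit_iff_isUnit_det]
  have h1 : c • (1 : Matrix n n ℂ) = Matrix.diagonal (fun _ => c) := by
    ext i j
    by_cases hij : i = j <;> simp [Matrix.one_apply, Matrix.diagonal, hij]
  rw [h1, Matrix.det_diagonal, Finset.prod_const]
  exact (pow_ne_zero _ hc).isUnit

lemma rank_of_structure {I K W V : Type*} [Fintype I] [Fintype K] [Fintype W] [Fintype V]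
    [DecidableEq I] [DecidableEq K] [DecidableEq W] [DecidableEq V]
    (M : Matrix I I ℂ) (f : I → K × V) (g : I → K × W) (φ ψ : I → ℂ)
    (pair : V → W → ℂ)
    (horth : ∀ w w' : W, ∑ v : V, pair v w * pair v w' =
      if w = w' then (Fintype.card V : ℂ) else 0)
    (hcard : (Fintype.card V : ℂ) ≠ 0)
    (hφ : ∀ r, φ r ≠ 0) (hψ : ∀ c, ψ c ≠ 0)
    (hf : Function.Surjective f) (hg : Function.Surjective g)
    (hM : ∀ r c, M r c = φ r *
      ((if (f r).1 = (g c).1 then pair (f r).2 (g c).2 else 0) * ψ c)) :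
    M.rank = Fintype.card K * Fintype.card W := by
  set N : Matrix (K × V) (K × W) ℂ :=
    Matrix.of fun q p => if q.1 = p.1 then pair q.2 p.2 else 0 with hN
  have hNtN : Nᵀ * N = (Fintype.card V : ℂ) • 1 := by
    ext ⟨κ', w⟩ ⟨κ'', w''⟩
    rw [Matrix.mul_apply, Fintype.sum_prod_type, Finset.sum_eq_single κ']
    · by_cases hκ : κ' = κ''
      · subst hκ
        simp only [hN, Matrix.of_apply, Matrix.transpose_apply, if_pos rfl, if_true]
        rw [horth w w'']
        by_cases hw : w = w'' <;> simp [hw, Matrix.one_apply, Prod.ext_iff]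
      · simp [hN, hκ, Ne.symm hκ, Matrix.one_apply, Prod.ext_iff]
    · intro κ _ hκ
      simp [hN, hκ]
    · simp
  have hrankN : N.rank = Fintype.card K * Fintype.card W := by
    refine le_antisymm ?_ ?_
    · simpa [Fintype.card_prod] using N.rank_le_card_width
    · have h1 : (Nᵀ * N).rank = Fintype.card (K × W) := by
        rw [hNtN]; exact rank_smul_one hcard
      have h2 := Matrix.rank_mul_le_right Nᵀ N
      rw [h1, Fintype.card_prod] at h2
      exact h2
  set A : Matrix I (K × V) ℂ := Matrix.of fun r q => φ r * if q = f r then 1 else 0 with hA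
  set B : Matrix (K × W) I ℂ := Matrix.of fun p c => (if p = g c then 1 else 0) * ψ c with hB
  have hMAB : M = A * N * B := by
    ext r c
    have hAN : ∀ p, (A * N) r p = φ r * N (f r) p := by
      intro p
      rw [Matrix.mul_apply, Finset.sum_eq_single (f r)]
      · simp [hA]
      · intro q _ hq; simp [hA, if_neg hq]
      · simp
    rw [Matrix.mul_apply, Finset.sum_eq_single (g c)]
    · rw [hAN, hM]; simp [hB, hN]; ring
    · intro p _ hp; rw [hAN]; simp [hB, if_neg hp]
    · simp
  set A' : Matrix (K × V) I ℂ :=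
    Matrix.of fun q r => if r = Function.surjInv hf q then (φ (Function.surjInv hf q))⁻¹ else 0
    with hA'
  set B' : Matrix I (K × W) ℂ :=
    Matrix.of fun c p => if c = Function.surjInv hg p then (ψ (Function.surjInv hg p))⁻¹ else 0
    with hB'
  have hNM : N = A' * M * B' := by
    ext q p
    have hA'M : ∀ c, (A' * M) q c =
        (φ (Function.surjInv hf q))⁻¹ * M (Function.surjInv hf q) c := by
      intro c
      rw [Matrix.mul_apply, Finset.sum_eq_single (Function.surjInv hf q)]
      · simp [hA']
      · intro r _ hr; simp [hA', if_neg hr]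
      · simp
    rw [Matrix.mul_apply, Finset.sum_eq_single (Function.surjInv hg p)]
    · rw [hA'M, hM (Function.surjInv hf q) (Function.surjInv hg p),
        Function.surjInv_eq hf, Function.surjInv_eq hg]
      simp only [hB', hN, Matrix.of_apply, if_pos rfl, if_true]
      rcases eq_or_ne q.1 p.1 with hqp | hqp
      · simp only [if_pos hqp]
        have h1 : φ (Function.surjInv hf q) ≠ 0 := hφ _
        have h2 : ψ (Function.surjInv hg p) ≠ 0 := hψ _
        field_simp
      · simp [hqp]
    · intro c _ hc; rw [hA'M]; simp [hB', if_neg hc]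
    · simp
  have hle1 : M.rank ≤ N.rank := by
    rw [hMAB]
    exact le_trans (Matrix.rank_mul_le_left _ _) (Matrix.rank_mul_le_right _ _)
  have hle2 : N.rank ≤ M.rank := by
    rw [hNM]
    exact le_trans (Matrix.rank_mul_le_left _ _) (Matrix.rank_mul_le_right _ _)
  omega

lemma sigmaX2_sq : sigmaX2 * sigmaX2 = 1 := by
  ext i j
  fin_cases i <;> fin_cases j <;>
    simp [sigmaX2, Matrix.mul_apply, Fin.sum_univ_two, Matrix.one_apply]

lemma sigmaX2_pow (s : ℕ) : sigmaX2 ^ s = if (s : ZMod 2) = 0 then 1 else sigmaX2 := by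
  induction s with
  | zero => simp
  | succ t ih =>
    rw [pow_succ, ih]
    push_cast
    rcases (by decide : ∀ u : ZMod 2, u = 0 ∨ u = 1) (t : ZMod 2) with h | h <;>
      simp [h, sigmaX2_sq, show (1 + 1 : ZMod 2) = 0 by decide]

lemma sigmaX2_pow_apply (s : ℕ) (α β : Fin 2) :
    (sigmaX2 ^ s) α β =
      if ((α : ℕ) : ZMod 2) + ((β : ℕ) : ZMod 2) + (s : ZMod 2) = 0 then 1 else 0 := by
  rw [sigmaX2_pow]
  rcases (by decide : ∀ u : ZMod 2, u = 0 ∨ u = 1) (s : ZMod 2) with h | h <;>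
    rw [h] <;> fin_cases α <;> fin_cases β <;>
      simp [sigmaX2, Matrix.one_apply, show (1 + 1 : ZMod 2) = 0 by decide,
        show (1 + 1 + 1 : ZMod 2) ≠ 0 by decide]

lemma prod_scaled_pow {q : ℕ} (P : Fin q → Prop) [DecidablePred P] (c : Fin q → ℂ)
    (s : Fin q → ℕ) (f : Fin q → Matrix (Fin 2) (Fin 2) ℂ)
    (hf : ∀ j, f j = if P j then c j • sigmaX2 ^ s j else 0) :
    (List.ofFn f).prod =
      if ∀ j, P j then (∏ j, c j) • sigmaX2 ^ (∑ j, s j) else 0 := by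
  induction q with
  | zero => simp
  | succ t ih =>
    rw [List.ofFn_succ, List.prod_cons,
      ih (fun j => P j.succ) (fun j => c j.succ) (fun j => s j.succ) _ (fun j => hf j.succ)]
    rw [hf 0]
    by_cases h0 : P 0
    · by_cases ht : ∀ j : Fin t, P j.succ
      · have hall : ∀ j : Fin (t + 1), P j := Fin.cases h0 ht
        rw [if_pos h0, if_pos ht, if_pos hall, Fin.prod_univ_succ, Fin.sum_univ_succ,
          pow_add, smul_mul_assoc, mul_smul_comm, smul_smul]
      · have : ¬ ∀ j : Fin (t + 1), P j := fun h => ht fun j => h j.succ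
        rw [if_pos h0, if_neg ht, if_neg this, mul_zero]
    · have : ¬ ∀ j : Fin (t + 1), P j := fun h => h0 (h 0)
      rw [if_neg h0, if_neg this, zero_mul]

lemma blocked_maj_apply {x : ℕ} (pa : Fin x → ZMod 2) {k : ℕ}
    (n m : Fin k → Fin 2 × Fin x) (α β : Fin 2) :
    (blocked (pMaj pa) MajTensor k n m) α β =
      sgn (blockSign (pMaj pa) n m) *
        (if ∀ j, (n j).2 = (m j).2 then
          (∏ j, (((Real.sqrt 2 : ℂ))⁻¹ * Complex.I ^ ((m j).1 : ℕ))) *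
          (if ((α : ℕ) : ZMod 2) + ∑ j, (((n j).1 : ℕ) : ZMod 2)
              = ((β : ℕ) : ZMod 2) + ∑ j, (((m j).1 : ℕ) : ZMod 2) then 1 else 0)
        else 0) := by
  classical
  rw [blocked, Matrix.smul_apply, smul_eq_mul]
  congr 1
  rw [prod_scaled_pow (fun j => (n j).2 = (m j).2)
    (fun j => ((Real.sqrt 2 : ℂ))⁻¹ * Complex.I ^ ((m j).1 : ℕ))
    (fun j => ((n j).1 : ℕ) + ((m j).1 : ℕ)) (fun j => MajTensor (n j) (m j))
    (fun j => rfl)]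
  by_cases h : ∀ j, (n j).2 = (m j).2
  · rw [if_pos h, if_pos h, Matrix.smul_apply, smul_eq_mul]
    congr 1
    rw [sigmaX2_pow_apply]
    congr 1
    rw [eq_iff_iff]
    have hc : ((∑ j, (((n j).1 : ℕ) + ((m j).1 : ℕ)) : ℕ) : ZMod 2)
        = ∑ j, (((n j).1 : ℕ) : ZMod 2) + ∑ j, (((m j).1 : ℕ) : ZMod 2) := by
      push_cast
      rw [Finset.sum_add_distrib]
    rw [hc, zmod2_eq_iff_add_eq_zero (((α : ℕ) : ZMod 2) + _)]
    constructor <;> intro hh <;> linear_combination hh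
  · rw [if_neg h, if_neg h, Matrix.zero_apply]

/-! #### Index bookkeeping -/

def epsF {x k : ℕ} (n : Fin k → Fin 2 × Fin x) : Fin k → ZMod 2 :=
  fun j => (((n j).1 : ℕ) : ZMod 2)

def epSum {x k : ℕ} (n : Fin k → Fin 2 × Fin x) : ZMod 2 := ∑ j, epsF n j

def paSum {x k : ℕ} (pa : Fin x → ZMod 2) (n : Fin k → Fin 2 × Fin x) : ZMod 2 :=
  ∑ j, pa ((n j).2)

def keyF {x k : ℕ} (r : (Fin k → Fin 2 × Fin x) × Fin 2) : (Fin k → Fin x) × ZMod 2 :=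
  (fun j => (r.1 j).2, ((r.2 : ℕ) : ZMod 2) + epSum r.1)

def prefF {x k : ℕ} (m : Fin k → Fin 2 × Fin x) : Fin k → ZMod 2 :=
  fun l => ∑ j : Fin k, if (j : ℕ) < (l : ℕ) then epsF m j else 0

def sufF {x k : ℕ} (m : Fin k → Fin 2 × Fin x) : Fin k → ZMod 2 :=
  fun l => ∑ j : Fin k, if (l : ℕ) ≤ (j : ℕ) then epsF m j else 0

def padF {k' : ℕ} (w : Fin k' → ZMod 2) : Fin (k' + 1) → ZMod 2 :=
  fun l => if h : 0 < (l : ℕ) then w ⟨(l : ℕ) - 1, by have := l.isLt; omega⟩ else 0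

def wcolF {x k' : ℕ} (m : Fin (k' + 1) → Fin 2 × Fin x) : Fin k' → ZMod 2 :=
  fun j' => ∑ j : Fin (k' + 1), if (j : ℕ) < (j' : ℕ) + 1 then epsF m j else 0

def phiA {x k : ℕ} (pa : Fin x → ZMod 2) (n : Fin k → Fin 2 × Fin x) : ZMod 2 :=
  ∑ jl ∈ Finset.univ.filter (fun jl : Fin k × Fin k => jl.1 < jl.2),
    pa ((n jl.1).2) * epsF n jl.2

def phiB {x k : ℕ} (pa : Fin x → ZMod 2) (m : Fin k → Fin 2 × Fin x) : ZMod 2 :=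
  ∑ jl ∈ Finset.univ.filter (fun jl : Fin k × Fin k => jl.1 < jl.2),
    (epsF m jl.1 + pa ((m jl.1).2)) * epsF m jl.2

def scalF {x k : ℕ} (m : Fin k → Fin 2 × Fin x) : ℂ :=
  ∏ j, ((Real.sqrt 2 : ℂ))⁻¹ * Complex.I ^ ((m j).1 : ℕ)

lemma scalF_ne_zero {x k : ℕ} (m : Fin k → Fin 2 × Fin x) : scalF m ≠ 0 := by
  rw [scalF]
  refine Finset.prod_ne_zero_iff.mpr fun j _ => mul_ne_zero (inv_ne_zero ?_)
    (pow_ne_zero _ Complex.I_ne_zero)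
  rw [Complex.ofReal_ne_zero]
  positivity

lemma pairs_sum {k : ℕ} (d e : Fin k → ZMod 2) :
    ∑ jl ∈ Finset.univ.filter (fun jl : Fin k × Fin k => jl.1 < jl.2), d jl.1 * e jl.2
      = ∑ l : Fin k, (∑ j : Fin k, if (j : ℕ) < (l : ℕ) then d j else 0) * e l := by
  rw [Finset.sum_filter, Fintype.sum_prod_type, Finset.sum_comm]
  apply Finset.sum_congr rfl
  intro l _
  rw [Finset.sum_mul]
  apply Finset.sum_congr rfl
  intro j _
  by_cases hjl : j < l
  · rw [if_pos hjl, if_pos (Fin.lt_iff_val_lt_val.mp hjl)]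
  · rw [if_neg hjl, if_neg (fun hh => hjl (Fin.lt_iff_val_lt_val.mpr hh)), zero_mul]

lemma blockSign_decomp {x k : ℕ} (pa : Fin x → ZMod 2) (n m : Fin k → Fin 2 × Fin x)
    (h : ∀ j, (n j).2 = (m j).2) :
    blockSign (pMaj pa) n m
      = phiA pa n + phiB pa m + ∑ l : Fin k, prefF m l * epsF n l := by
  have htwo : (2 : ZMod 2) = 0 := by decide
  have hstep : ∀ jl : Fin k × Fin k,
      pMaj pa (m jl.1) * (pMaj pa (n jl.2) + pMaj pa (m jl.2))
      = pa ((n jl.1).2) * epsF n jl.2 + (epsF m jl.1 + pa ((m jl.1).2)) * epsF m jl.2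
        + epsF m jl.1 * epsF n jl.2 := by
    intro jl
    simp only [pMaj, epsF]
    rw [h jl.1, h jl.2]
    linear_combination (((((m jl.1).1 : ℕ) : ZMod 2) + pa ((m jl.1).2))
      * pa ((m jl.2).2)) * htwo
  rw [blockSign, Finset.sum_congr rfl (fun jl _ => hstep jl), Finset.sum_add_distrib,
    Finset.sum_add_distrib, phiA, phiB, pairs_sum]
  rfl

lemma padF_wcolF {x k' : ℕ} (m : Fin (k' + 1) → Fin 2 × Fin x) (l : Fin (k' + 1)) :
    padF (wcolF m) l = prefF m l := by
  rw [padF, prefF]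
  by_cases hl : 0 < (l : ℕ)
  · rw [dif_pos hl]
    show (∑ j : Fin (k' + 1), if (j : ℕ) < ((l : ℕ) - 1) + 1 then epsF m j else 0) = _
    apply Finset.sum_congr rfl
    intro j _
    refine if_congr ?_ rfl rfl
    omega
  · rw [dif_neg hl]
    symm
    apply Finset.sum_eq_zero
    intro j _
    rw [if_neg (by omega)]

lemma sufF_eq_pref_add {x k : ℕ} (m : Fin k → Fin 2 × Fin x) (l : Fin k) :
    sufF m l = prefF m l + epSum m := by
  rw [sufF, prefF, epSum, ← Finset.sum_add_distrib]
  apply Finset.sum_congr rfl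
  intro j _
  by_cases hj : (l : ℕ) ≤ (j : ℕ)
  · rw [if_pos hj, if_neg (by omega), zero_add]
  · rw [if_neg hj, if_pos (by omega)]
    exact (zmod2_add_self _).symm

lemma cross_right {x k : ℕ} (n m : Fin k → Fin 2 × Fin x) :
    ∑ l, sufF m l * epsF n l
      = (∑ l, prefF m l * epsF n l) + epSum m * epSum n := by
  rw [Finset.sum_congr rfl (fun l _ => by rw [sufF_eq_pref_add m l, add_mul]),
    Finset.sum_add_distrib]
  congr 1
  rw [← Finset.mul_sum]
  rfl

lemma pBlocked {x k : ℕ} (pa : Fin x → ZMod 2) (n : Fin k → Fin 2 × Fin x) :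
    (∑ j, pMaj pa (n j)) = epSum n + paSum pa n := by
  rw [epSum, paSum, ← Finset.sum_add_distrib]
  rfl

/-! #### Sum helpers and telescoping -/

lemma sum_range_ite_lt {M N : ℕ} (hMN : M ≤ N) (f : ℕ → ZMod 2) :
    ∑ i ∈ Finset.range N, (if i < M then f i else 0) = ∑ i ∈ Finset.range M, f i := by
  rw [← Finset.sum_filter]
  apply Finset.sum_congr
  · ext i; simp only [Finset.mem_filter, Finset.mem_range]; omega
  · intro i _; rfl

lemma sum_range_ite_le {M N : ℕ} (f : ℕ → ZMod 2) :
    ∑ i ∈ Finset.range N, (if M ≤ i then f i else 0) = ∑ i ∈ Finset.Ico M N, f i := by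
  rw [← Finset.sum_filter]
  apply Finset.sum_congr
  · ext i; simp only [Finset.mem_filter, Finset.mem_range, Finset.mem_Ico]; omega
  · intro i _; rfl

lemma exists_prefix (k' : ℕ) (w : Fin k' → ZMod 2) :
    ∃ δ : Fin (k' + 1) → ZMod 2, ∀ l : Fin (k' + 1),
      (∑ j : Fin (k' + 1), if (j : ℕ) < (l : ℕ) then δ j else 0) = padF w l := by
  set W : ℕ → ZMod 2 := fun t => if h : 0 < t ∧ t - 1 < k' then w ⟨t - 1, h.2⟩ else 0 with hW
  refine ⟨fun j => W ((j : ℕ) + 1) - W (j : ℕ), fun l => ?_⟩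
  have h1 : (∑ j : Fin (k' + 1), if (j : ℕ) < (l : ℕ) then W ((j : ℕ) + 1) - W (j : ℕ) else 0)
      = ∑ t ∈ Finset.range (l : ℕ), (W (t + 1) - W t) := by
    rw [Fin.sum_univ_eq_sum_range (fun t => if t < (l : ℕ) then W (t + 1) - W t else 0) (k' + 1)]
    exact sum_range_ite_lt (by have := l.isLt; omega) _
  rw [h1, Finset.sum_range_sub W (l : ℕ)]
  have hW0 : W 0 = 0 := by simp [hW]
  rw [hW0, sub_zero, padF]
  by_cases hl : 0 < (l : ℕ)
  · have hcond : 0 < (l : ℕ) ∧ (l : ℕ) - 1 < k' := ⟨hl, by have := l.isLt; omega⟩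
    simp only [hW]
    rw [dif_pos hcond, dif_pos hl]
  · simp only [hW]
    rw [dif_neg (by omega), dif_neg hl]

lemma exists_suffix (k : ℕ) (v : Fin k → ZMod 2) :
    ∃ δ : Fin k → ZMod 2, ∀ l : Fin k,
      (∑ j : Fin k, if (l : ℕ) ≤ (j : ℕ) then δ j else 0) = v l := by
  set W : ℕ → ZMod 2 := fun t => if h : t < k then v ⟨t, h⟩ else 0 with hW
  refine ⟨fun j => W (j : ℕ) - W ((j : ℕ) + 1), fun l => ?_⟩
  rw [Fin.sum_univ_eq_sum_range (fun t => if (l : ℕ) ≤ t then W t - W (t + 1) else 0) k,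
    sum_range_ite_le, Finset.sum_Ico_eq_sub _ (le_of_lt l.isLt),
    Finset.sum_range_sub' W, Finset.sum_range_sub' W]
  have hWk : W k = 0 := by simp [hW]
  have hWl : W (l : ℕ) = v l := by rw [hW]; simp [l.isLt]
  rw [hWk, hWl]
  ring

/-! #### Orthogonality -/

lemma horth_gen {k : ℕ} {W : Type*} [DecidableEq W] (e : W → Fin k → ZMod 2)
    (he : ∀ w w' : W, e w + e w' = 0 ↔ w = w') (w w' : W) :
    ∑ v : Fin k → ZMod 2, sgn (∑ j, e w j * v j) * sgn (∑ j, e w' j * v j)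
      = if w = w' then (Fintype.card (Fin k → ZMod 2) : ℂ) else 0 := by
  have h1 : ∀ v : Fin k → ZMod 2, sgn (∑ j, e w j * v j) * sgn (∑ j, e w' j * v j)
      = sgn (∑ j, (e w + e w') j * v j) := by
    intro v
    rw [← sgn_add, ← Finset.sum_add_distrib]
    apply congrArg
    apply Finset.sum_congr rfl
    intro j _
    simp only [Pi.add_apply]
    ring
  simp_rw [h1]
  rw [sum_sgn_pair]
  have hcV : (Fintype.card (Fin k → ZMod 2)) = 2 ^ k := by
    rw [Fintype.card_fun]
    simp
  rw [hcV]
  push_cast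
  by_cases hww : w = w'
  · rw [if_pos ((he w w').mpr hww), if_pos hww]
  · rw [if_neg (fun h => hww ((he w w').mp h)), if_neg hww]

lemma he_id {k : ℕ} (v w : Fin k → ZMod 2) : v + w = 0 ↔ v = w := by
  constructor <;> intro h
  · funext j
    exact (zmod2_eq_iff_add_eq_zero _ _).mpr (congrFun h j)
  · subst h
    funext j
    exact zmod2_add_self _
lemma he_padF {k' : ℕ} (w w' : Fin k' → ZMod 2) : padF w + padF w' = 0 ↔ w = w' := by
  constructor <;> intro h
  · funext j'
    have h2 := congrFun h ⟨(j' : ℕ) + 1, by have := j'.isLt; omega⟩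
    simp only [Pi.add_apply, Pi.zero_apply, padF, Fin.val_mk] at h2
    rw [dif_pos (Nat.succ_pos _), dif_pos (Nat.succ_pos _)] at h2
    have hj : (⟨(j' : ℕ) + 1 - 1, by have := j'.isLt; omega⟩ : Fin k') = j' := by
      ext; simp
    rw [hj] at h2
    exact (zmod2_eq_iff_add_eq_zero _ _).mpr h2
  · subst h
    funext l
    simp only [Pi.add_apply, Pi.zero_apply]
    exact zmod2_add_self _


lemma zmod2_mul_self (u : ZMod 2) : u * u = u := by revert u; decide

lemma zmod2_swap (a b c d : ZMod 2) : a + b = c + d ↔ c + b = a + d := by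
  revert a b c d; decide

lemma blocked_maj_apply' {x : ℕ} (pa : Fin x → ZMod 2) {k : ℕ}
    (n m : Fin k → Fin 2 × Fin x) (α β : Fin 2) :
    (blocked (pMaj pa) MajTensor k n m) α β =
      sgn (blockSign (pMaj pa) n m) *
        (if ∀ j, (n j).2 = (m j).2 then scalF m *
          (if ((α : ℕ) : ZMod 2) + epSum n = ((β : ℕ) : ZMod 2) + epSum m then 1 else 0)
        else 0) :=
  blocked_maj_apply pa n m α β

end Aux

/-- The `k`-fold blocked Majorana-shift tensor with ancilla has right
rank `2·dᵏ` and left rank `dᵏ`, where `d = 2x`. -/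
theorem majorana_blocked_ranks {x : ℕ} (hx : 1 ≤ x) (pa : Fin x → ZMod 2)
    (k : ℕ) (hk : 1 ≤ k) :
    rightRank (fun n : Fin k → Fin 2 × Fin x => ∑ j, pMaj pa (n j))
        (blocked (pMaj pa) MajTensor k) = 2 * (2 * x) ^ k ∧
    leftRank (blocked (pMaj pa) MajTensor k) = (2 * x) ^ k := by
  obtain ⟨k', rfl⟩ : ∃ k', k = k' + 1 := ⟨k - 1, by omega⟩
  clear hk
  -- shared surjectivity of the row map
  have hf : Function.Surjective
      (fun r : (Fin (k' + 1) → Fin 2 × Fin x) × Fin 2 => (keyF r, epsF r.1)) := by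
    rintro ⟨⟨a, u⟩, v⟩
    refine ⟨(fun j => (⟨(v j).val, ZMod.val_lt (v j)⟩, a j),
      ⟨(u - ∑ j, v j).val, ZMod.val_lt _⟩), ?_⟩
    have heps : epsF (fun j => ((⟨(v j).val, ZMod.val_lt (v j)⟩ : Fin 2), a j)) = v := by
      funext j
      exact zmod2_val_cast (v j)
    refine Prod.ext (Prod.ext rfl ?_) heps
    show ((((u - ∑ j, v j).val : ℕ) : ZMod 2) + epSum _) = u
    rw [zmod2_val_cast, epSum, heps, sub_add_cancel]
  have hcard : ((Fintype.card (Fin (k' + 1) → ZMod 2) : ℕ) : ℂ) ≠ 0 :=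
    Nat.cast_ne_zero.mpr Fintype.card_ne_zero
  constructor
  · -- right rank
    have hgR : Function.Surjective
        (fun c : (Fin (k' + 1) → Fin 2 × Fin x) × Fin 2 => (keyF c, sufF c.1)) := by
      rintro ⟨⟨a, u⟩, v⟩
      obtain ⟨δ, hδ⟩ := exists_suffix (k' + 1) v
      refine ⟨(fun j => (⟨(δ j).val, ZMod.val_lt (δ j)⟩, a j),
        ⟨(u - ∑ j, δ j).val, ZMod.val_lt _⟩), ?_⟩
      have heps : epsF (fun j => ((⟨(δ j).val, ZMod.val_lt (δ j)⟩ : Fin 2), a j)) = δ := by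
        funext j
        exact zmod2_val_cast (δ j)
      refine Prod.ext (Prod.ext rfl ?_) ?_
      · show ((((u - ∑ j, δ j).val : ℕ) : ZMod 2) + epSum _) = u
        rw [zmod2_val_cast, epSum, heps, sub_add_cancel]
      · show sufF _ = v
        funext l
        rw [sufF]
        simp only [heps]
        exact hδ l
    have hMR : ∀ r c : (Fin (k' + 1) → Fin 2 × Fin x) × Fin 2,
        (Matrix.of fun (r c : (Fin (k' + 1) → Fin 2 × Fin x) × Fin 2) =>
          sgn ((∑ j, pMaj pa (r.1 j)) * (∑ j, pMaj pa (c.1 j))) *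
            blocked (pMaj pa) MajTensor (k' + 1) r.1 c.1 c.2 r.2) r c
        = (fun r : (Fin (k' + 1) → Fin 2 × Fin x) × Fin 2 =>
            sgn (phiA pa r.1 + epSum r.1 * paSum pa r.1 + paSum pa r.1)) r *
          ((if ((fun r : (Fin (k' + 1) → Fin 2 × Fin x) × Fin 2 =>
                (keyF r, epsF r.1)) r).1
              = ((fun c : (Fin (k' + 1) → Fin 2 × Fin x) × Fin 2 =>
                (keyF c, sufF c.1)) c).1 then
            (fun (v w : Fin (k' + 1) → ZMod 2) => sgn (∑ j, w j * v j))
              ((fun r : (Fin (k' + 1) → Fin 2 × Fin x) × Fin 2 => (keyF r, epsF r.1)) r).2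
              ((fun c : (Fin (k' + 1) → Fin 2 × Fin x) × Fin 2 => (keyF c, sufF c.1)) c).2
          else 0) *
          (fun c : (Fin (k' + 1) → Fin 2 × Fin x) × Fin 2 =>
            sgn (phiB pa c.1 + paSum pa c.1 * epSum c.1) * scalF c.1) c) := by
      intro r c
      dsimp only [Matrix.of_apply]
      rw [blocked_maj_apply' pa r.1 c.1 c.2 r.2]
      by_cases hanc : ∀ j, (r.1 j).2 = (c.1 j).2
      · rw [if_pos hanc]
        have hPsum : paSum pa r.1 = paSum pa c.1 :=
          Finset.sum_congr rfl (fun j _ => by rw [hanc j])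
        have hsgn : (∑ j, pMaj pa (r.1 j)) * (∑ j, pMaj pa (c.1 j))
              + blockSign (pMaj pa) r.1 c.1
            = (phiA pa r.1 + epSum r.1 * paSum pa r.1 + paSum pa r.1)
              + (phiB pa c.1 + paSum pa c.1 * epSum c.1)
              + ∑ j, sufF c.1 j * epsF r.1 j := by
          rw [pBlocked, pBlocked, blockSign_decomp pa r.1 c.1 hanc, cross_right, hPsum]
          linear_combination zmod2_mul_self (paSum pa c.1)
        have hprod : sgn ((∑ j, pMaj pa (r.1 j)) * (∑ j, pMaj pa (c.1 j)))
              * sgn (blockSign (pMaj pa) r.1 c.1)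
            = sgn (phiA pa r.1 + epSum r.1 * paSum pa r.1 + paSum pa r.1)
              * sgn (phiB pa c.1 + paSum pa c.1 * epSum c.1)
              * sgn (∑ j, sufF c.1 j * epsF r.1 j) := by
          rw [← sgn_add, ← sgn_add, ← sgn_add, hsgn]
        have hkeyiff : (keyF r = keyF c)
            ↔ (((c.2 : ℕ) : ZMod 2) + epSum r.1 = ((r.2 : ℕ) : ZMod 2) + epSum c.1) := by
          rw [keyF, keyF, Prod.mk.injEq]
          constructor
          · rintro ⟨-, h2⟩
            exact (zmod2_swap _ _ _ _).mp h2
          · intro h2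
            exact ⟨funext hanc, (zmod2_swap _ _ _ _).mp h2⟩
        by_cases hcond : ((c.2 : ℕ) : ZMod 2) + epSum r.1 = ((r.2 : ℕ) : ZMod 2) + epSum c.1
        · rw [if_pos hcond, if_pos (hkeyiff.mpr hcond)]
          linear_combination scalF c.1 * hprod
        · rw [if_neg hcond, if_neg (fun hh => hcond (hkeyiff.mp hh))]
          simp
      · rw [if_neg hanc]
        have hne : keyF r ≠ keyF c := fun hh =>
          hanc (fun j => congrFun (congrArg Prod.fst hh) j)
        rw [if_neg hne]
        simp
    have hrk := rank_of_structure
      (Matrix.of fun (r c : (Fin (k' + 1) → Fin 2 × Fin x) × Fin 2) =>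
        sgn ((∑ j, pMaj pa (r.1 j)) * (∑ j, pMaj pa (c.1 j))) *
          blocked (pMaj pa) MajTensor (k' + 1) r.1 c.1 c.2 r.2)
      (fun r => (keyF r, epsF r.1)) (fun c => (keyF c, sufF c.1))
      (fun r => sgn (phiA pa r.1 + epSum r.1 * paSum pa r.1 + paSum pa r.1))
      (fun c => sgn (phiB pa c.1 + paSum pa c.1 * epSum c.1) * scalF c.1)
      (fun v w => sgn (∑ j, w j * v j))
      (horth_gen (fun t => t) he_id)
      hcard
      (fun r => sgn_ne_zero _)
      (fun c => mul_ne_zero (sgn_ne_zero _) (scalF_ne_zero _))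
      hf hgR hMR
    have hre : rightRank (fun n : Fin (k' + 1) → Fin 2 × Fin x => ∑ j, pMaj pa (n j))
        (blocked (pMaj pa) MajTensor (k' + 1))
        = (Matrix.of fun (r c : (Fin (k' + 1) → Fin 2 × Fin x) × Fin 2) =>
          sgn ((∑ j, pMaj pa (r.1 j)) * (∑ j, pMaj pa (c.1 j))) *
            blocked (pMaj pa) MajTensor (k' + 1) r.1 c.1 c.2 r.2).rank := rfl
    rw [hre, hrk]
    simp only [Fintype.card_prod, Fintype.card_fun, ZMod.card, Fintype.card_fin]
    rw [mul_pow]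
    ring
  · -- left rank
    have hgL : Function.Surjective
        (fun c : (Fin (k' + 1) → Fin 2 × Fin x) × Fin 2 => (keyF c, wcolF c.1)) := by
      rintro ⟨⟨a, u⟩, w⟩
      obtain ⟨δ, hδ⟩ := exists_prefix k' w
      refine ⟨(fun j => (⟨(δ j).val, ZMod.val_lt (δ j)⟩, a j),
        ⟨(u - ∑ j, δ j).val, ZMod.val_lt _⟩), ?_⟩
      have heps : epsF (fun j => ((⟨(δ j).val, ZMod.val_lt (δ j)⟩ : Fin 2), a j)) = δ := by
        funext j
        exact zmod2_val_cast (δ j)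
      refine Prod.ext (Prod.ext rfl ?_) ?_
      · show ((((u - ∑ j, δ j).val : ℕ) : ZMod 2) + epSum _) = u
        rw [zmod2_val_cast, epSum, heps, sub_add_cancel]
      · show wcolF _ = w
        funext j'
        rw [wcolF]
        simp only [heps]
        have hj1 : ((j' : ℕ) + 1) < k' + 1 := by have := j'.isLt; omega
        have h2 := hδ ⟨(j' : ℕ) + 1, hj1⟩
        simp only [Fin.val_mk] at h2
        rw [h2, padF]
        rw [dif_pos (Nat.succ_pos _)]
        congr 1
    have hML : ∀ r c : (Fin (k' + 1) → Fin 2 × Fin x) × Fin 2,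
        (Matrix.of fun (r c : (Fin (k' + 1) → Fin 2 × Fin x) × Fin 2) =>
          blocked (pMaj pa) MajTensor (k' + 1) r.1 c.1 r.2 c.2) r c
        = (fun r : (Fin (k' + 1) → Fin 2 × Fin x) × Fin 2 => sgn (phiA pa r.1)) r *
          ((if ((fun r : (Fin (k' + 1) → Fin 2 × Fin x) × Fin 2 =>
                (keyF r, epsF r.1)) r).1
              = ((fun c : (Fin (k' + 1) → Fin 2 × Fin x) × Fin 2 =>
                (keyF c, wcolF c.1)) c).1 then
            (fun (v : Fin (k' + 1) → ZMod 2) (w : Fin k' → ZMod 2) =>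
                sgn (∑ j, padF w j * v j))
              ((fun r : (Fin (k' + 1) → Fin 2 × Fin x) × Fin 2 => (keyF r, epsF r.1)) r).2
              ((fun c : (Fin (k' + 1) → Fin 2 × Fin x) × Fin 2 => (keyF c, wcolF c.1)) c).2
          else 0) *
          (fun c : (Fin (k' + 1) → Fin 2 × Fin x) × Fin 2 =>
            sgn (phiB pa c.1) * scalF c.1) c) := by
      intro r c
      dsimp only [Matrix.of_apply]
      rw [blocked_maj_apply' pa r.1 c.1 r.2 c.2]
      by_cases hanc : ∀ j, (r.1 j).2 = (c.1 j).2
      · rw [if_pos hanc]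
        have hpadpair : sgn (∑ j, padF (wcolF c.1) j * epsF r.1 j)
            = sgn (∑ j, prefF c.1 j * epsF r.1 j) := by
          apply congrArg
          exact Finset.sum_congr rfl (fun j _ => by rw [padF_wcolF])
        have hprod : sgn (blockSign (pMaj pa) r.1 c.1)
            = sgn (phiA pa r.1) * sgn (phiB pa c.1)
              * sgn (∑ j, prefF c.1 j * epsF r.1 j) := by
          rw [← sgn_add, ← sgn_add, blockSign_decomp pa r.1 c.1 hanc]
        have hkeyiff : (keyF r = keyF c)
            ↔ (((r.2 : ℕ) : ZMod 2) + epSum r.1 = ((c.2 : ℕ) : ZMod 2) + epSum c.1) := by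
          rw [keyF, keyF, Prod.mk.injEq]
          constructor
          · rintro ⟨-, h2⟩
            exact h2
          · intro h2
            exact ⟨funext hanc, h2⟩
        by_cases hcond : ((r.2 : ℕ) : ZMod 2) + epSum r.1 = ((c.2 : ℕ) : ZMod 2) + epSum c.1
        · rw [if_pos hcond, if_pos (hkeyiff.mpr hcond), hpadpair]
          linear_combination scalF c.1 * hprod
        · rw [if_neg hcond, if_neg (fun hh => hcond (hkeyiff.mp hh))]
          simp
      · rw [if_neg hanc]
        have hne : keyF r ≠ keyF c := fun hh =>
          hanc (fun j => congrFun (congrArg Prod.fst hh) j)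
        rw [if_neg hne]
        simp
    have hrk := rank_of_structure
      (Matrix.of fun (r c : (Fin (k' + 1) → Fin 2 × Fin x) × Fin 2) =>
        blocked (pMaj pa) MajTensor (k' + 1) r.1 c.1 r.2 c.2)
      (fun r => (keyF r, epsF r.1)) (fun c => (keyF c, wcolF c.1))
      (fun r => sgn (phiA pa r.1))
      (fun c => sgn (phiB pa c.1) * scalF c.1)
      (fun v w => sgn (∑ j, padF w j * v j))
      (horth_gen padF he_padF)
      hcard
      (fun r => sgn_ne_zero _)
      (fun c => mul_ne_zero (sgn_ne_zero _) (scalF_ne_zero _))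
      hf hgL hML
    have hle : leftRank (blocked (pMaj pa) MajTensor (k' + 1))
        = (Matrix.of fun (r c : (Fin (k' + 1) → Fin 2 × Fin x) × Fin 2) =>
          blocked (pMaj pa) MajTensor (k' + 1) r.1 c.1 r.2 c.2).rank := rfl
    rw [hle, hrk]
    simp only [Fintype.card_prod, Fintype.card_fun, ZMod.card, Fintype.card_fin]
    rw [mul_pow]
    ring

end

end FQCA
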